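/- Let D be a self-adjoint operator on H and a ∈ B(H). If there exist a constant c > 0 and a sequence t_k ↓ 0 such that ‖e^{i t_k D} a e^{-i t_k D} − a‖ ≤ c t_k for all k, then a is weakly D-differentiable and ‖wD(a)‖ ≤ c. -/

import Mathlib

open Complex Filter Topology MeasureTheory
open scoped Topology

local notation "⟪" x ", " y "⟫" => @inner ℂ _ _ x y

variable {H : Type*} [NormedAddCommGroup H] [InnerProductSpace ℂ H] [CompleteSpace H]

/-- `b` is the bounded operator implementing the commutator form
`(ξ, η) ↦ ⟨aξ, Dη⟩ − ⟨aDξ, η⟩` on `dom D × dom D`; i.e. `a` is weakly `D`-differentiable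
with derivative `wD(a) = b`. -/
def IsWeakDeriv (D : H →ₗ.[ℂ] H) (a b : H →L[ℂ] H) : Prop :=
  ∀ ξ η : D.domain, ⟪b (ξ : H), (η : H)⟫ = ⟪a (ξ : H), D η⟫ - ⟪a (D ξ), (η : H)⟫

/-- `conjAd U t a = U t ∘ a ∘ U (−t)`, i.e. `α_t(a) = e^{itD} a e^{-itD}`. -/
noncomputable def conjAd (U : ℝ → H →L[ℂ] H) (t : ℝ) (a : H →L[ℂ] H) : H →L[ℂ] H :=
  (U t).comp (a.comp (U (-t)))

/-- `U` is the strongly continuous one-parameter unitary group `t ↦ e^{itD}`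
generated by the self-adjoint operator `D` (Stone's theorem characterization). -/
structure IsStoneGroupOf (D : H →ₗ.[ℂ] H) (U : ℝ → H →L[ℂ] H) : Prop where
  map_zero : U 0 = 1
  map_add : ∀ s t : ℝ, U (s + t) = (U s).comp (U t)
  isometry : ∀ (t : ℝ) (ξ : H), ‖U t ξ‖ = ‖ξ‖
  hasDerivAt : ∀ ξ : D.domain, HasDerivAt (fun t : ℝ => U t (ξ : H)) (Complex.I • D ξ) 0
  mem_domain : ∀ ξ v : H, HasDerivAt (fun t : ℝ => U t ξ) v 0 → ξ ∈ D.domain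

section Aux

variable {H : Type*} [NormedAddCommGroup H] [InnerProductSpace ℂ H] [CompleteSpace H]

private lemma stone_inner_map {D : H →ₗ.[ℂ] H} {U : ℝ → H →L[ℂ] H}
    (hU : IsStoneGroupOf D U) (s : ℝ) (x y : H) :
    ⟪U s x, U s y⟫ = ⟪x, y⟫ :=
  (LinearIsometry.mk ((U s) : H →ₗ[ℂ] H) (hU.isometry s)).inner_map_map x y

private lemma stone_comp {D : H →ₗ.[ℂ] H} {U : ℝ → H →L[ℂ] H}
    (hU : IsStoneGroupOf D U) (s : ℝ) (y : H) : U s (U (-s) y) = y := by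
  have h := hU.map_add s (-s)
  rw [add_neg_cancel, hU.map_zero] at h
  calc U s (U (-s) y) = ((U s).comp (U (-s))) y := rfl
    _ = (1 : H →L[ℂ] H) y := by rw [← h]
    _ = y := rfl

private lemma stone_inner_right {D : H →ₗ.[ℂ] H} {U : ℝ → H →L[ℂ] H}
    (hU : IsStoneGroupOf D U) (s : ℝ) (x y : H) :
    ⟪U s x, y⟫ = ⟪x, U (-s) y⟫ := by
  conv_lhs => rw [← stone_comp hU s y, stone_inner_map hU]

private lemma key_bound {D : H →ₗ.[ℂ] H} {U : ℝ → H →L[ℂ] H}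
    (hU : IsStoneGroupOf D U) (a : H →L[ℂ] H) (c : ℝ)
    (t : ℕ → ℝ) (ht0 : ∀ k, 0 < t k)
    (htlim : Tendsto t atTop (𝓝 0))
    (hb : ∀ k, ‖conjAd U (t k) a - a‖ ≤ c * t k)
    (ξ η : D.domain) :
    ‖(⟪a (ξ : H), D η⟫ - ⟪a (D ξ), (η : H)⟫ : ℂ)‖ ≤ c * (‖(ξ : H)‖ * ‖(η : H)‖) := by
  set f : ℝ → ℂ := fun s => ⟪a (U (-s) (ξ : H)), U (-s) (η : H)⟫ with hf
  -- derivative of s ↦ U (-s) ξ at 0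
  have hderiv : ∀ ζ : D.domain,
      HasDerivAt (fun s : ℝ => U (-s) (ζ : H)) (-(Complex.I • D ζ)) 0 := by
    intro ζ
    have h1 := hU.hasDerivAt ζ
    have h2 : HasDerivAt (fun s : ℝ => -s) (-1 : ℝ) 0 := hasDerivAt_neg' 0
    have h1' : HasDerivAt (fun s : ℝ => U s (ζ : H)) (Complex.I • D ζ) (-(0:ℝ)) := by
      simpa using h1
    have := h1'.scomp (0 : ℝ) h2
    simpa [Function.comp_def] using this
  have ha : HasDerivAt (fun s : ℝ => a (U (-s) (ξ : H))) (a (-(Complex.I • D ξ))) 0 := by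
    simpa [Function.comp_def] using (a.restrictScalars ℝ).hasFDerivAt.comp_hasDerivAt (0:ℝ) (hderiv ξ)
  have hg : HasDerivAt f
      (⟪a (U (-(0:ℝ)) (ξ : H)), -(Complex.I • D η)⟫
        + ⟪a (-(Complex.I • D ξ)), U (-(0:ℝ)) (η : H)⟫) 0 :=
    ha.inner ℂ (hderiv η)
  have hU0 : ∀ y : H, U (-(0:ℝ)) y = y := by
    intro y
    rw [neg_zero, hU.map_zero]
    rfl
  set d : ℂ := -Complex.I * (⟪a (ξ : H), D η⟫ - ⟪a (D ξ), (η : H)⟫) with hd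
  have hgd : HasDerivAt f d 0 := by
    convert hg using 1
    rw [hd]
    simp only [hU0, a.map_neg, a.map_smul, inner_neg_right, inner_neg_left,
      inner_smul_right, inner_smul_left, Complex.conj_I]
    ring
  have hslope := hasDerivAt_iff_tendsto_slope.mp hgd
  have htt : Tendsto t atTop (𝓝[≠] (0:ℝ)) := by
    refine tendsto_nhdsWithin_of_tendsto_nhds_of_eventually_within _ htlim ?_
    exact Eventually.of_forall fun k => (ht0 k).ne'
  have hcomp : Tendsto (fun k => slope f 0 (t k)) atTop (𝓝 d) := hslope.comp htt
  have hbound : ∀ k, ‖slope f 0 (t k)‖ ≤ c * (‖(ξ : H)‖ * ‖(η : H)‖) := by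
    intro k
    have h1 : f (t k) - f 0 = ⟪(conjAd U (t k) a - a) (ξ : H), (η : H)⟫ := by
      rw [ContinuousLinearMap.sub_apply, inner_sub_left]
      congr 1
      · rw [conjAd]
        simp only [ContinuousLinearMap.comp_apply]
        rw [stone_inner_right hU]
      · simp only [hf, hU0]
    have h2 : ‖f (t k) - f 0‖ ≤ c * t k * (‖(ξ : H)‖ * ‖(η : H)‖) := by
      rw [h1]
      calc ‖(⟪(conjAd U (t k) a - a) (ξ : H), (η : H)⟫ : ℂ)‖
          ≤ ‖(conjAd U (t k) a - a) (ξ : H)‖ * ‖(η : H)‖ := norm_inner_le_norm _ _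
        _ ≤ ‖conjAd U (t k) a - a‖ * ‖(ξ : H)‖ * ‖(η : H)‖ := by
            gcongr
            exact (conjAd U (t k) a - a).le_opNorm _
        _ ≤ c * t k * ‖(ξ : H)‖ * ‖(η : H)‖ :=
            mul_le_mul_of_nonneg_right
              (mul_le_mul_of_nonneg_right (hb k) (norm_nonneg _)) (norm_nonneg _)
        _ = c * t k * (‖(ξ : H)‖ * ‖(η : H)‖) := by ring
    have htk := ht0 k
    rw [slope_def_module]
    rw [norm_smul]
    simp only [sub_zero]
    rw [norm_inv, Real.norm_of_nonneg htk.le]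
    rw [inv_mul_le_iff₀ htk]
    calc ‖f (t k) - f 0‖ ≤ c * t k * (‖(ξ : H)‖ * ‖(η : H)‖) := h2
      _ = t k * (c * (‖(ξ : H)‖ * ‖(η : H)‖)) := by ring
  have hdle : ‖d‖ ≤ c * (‖(ξ : H)‖ * ‖(η : H)‖) :=
    le_of_tendsto (hcomp.norm) (Eventually.of_forall hbound)
  calc ‖(⟪a (ξ : H), D η⟫ - ⟪a (D ξ), (η : H)⟫ : ℂ)‖ = ‖d‖ := by
        rw [hd, norm_mul]
        simp
    _ ≤ _ := hdle

end Aux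

/-- If `‖α_{t_k}(a) − a‖ ≤ c t_k` along some sequence `t_k ↓ 0` then `a` is
weakly `D`-differentiable with `‖wD(a)‖ ≤ c`. -/
theorem isWeakDeriv_of_lipschitz_along_sequence
    (D : H →ₗ.[ℂ] H) (hD : IsSelfAdjoint D)
    (U : ℝ → H →L[ℂ] H) (hU : IsStoneGroupOf D U)
    (a : H →L[ℂ] H) (c : ℝ) (hc : 0 < c)
    (t : ℕ → ℝ) (ht0 : ∀ k, 0 < t k) (htanti : StrictAnti t)
    (htlim : Tendsto t atTop (𝓝 0))
    (hb : ∀ k, ‖conjAd U (t k) a - a‖ ≤ c * t k) :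
    ∃ b : H →L[ℂ] H, IsWeakDeriv D a b ∧ ‖b‖ ≤ c := by
  classical
  have hdense : Dense (D.domain : Set H) := hD.dense_domain
  set e : D.domain →L[ℂ] H := D.domain.subtypeL with he
  have h_dense : DenseRange e := hdense.denseRange_val
  have h1 : ∀ x : D.domain, ‖x‖ ≤ ((1 : NNReal) : ℝ) * ‖e x‖ := by
    intro x
    simp [he, Submodule.coe_norm]
  have h_e : IsUniformInducing e :=
    (ContinuousLinearMap.isUniformEmbedding_of_bound e h1).isUniformInducing
  have hbound := key_bound hU a c t ht0 htlim hb
  -- the commutator form as a continuous functional on the domain, for fixed `ξ`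
  set form : D.domain → D.domain →L[ℂ] ℂ := fun ξ =>
    LinearMap.mkContinuous
      { toFun := fun η => ⟪a (ξ : H), D η⟫ - ⟪a (D ξ), (η : H)⟫
        map_add' := fun x y => by
          simp only [D.map_add, inner_add_right, Submodule.coe_add]
          ring
        map_smul' := fun m x => by
          simp only [D.map_smul, inner_smul_right, Submodule.coe_smul_of_tower,
            RingHom.id_apply, smul_eq_mul]
          ring }
      (c * ‖(ξ : H)‖)
      (fun η => by
        simpa [mul_assoc, Submodule.coe_norm] using hbound ξ η) with hform
  have hform_apply : ∀ ξ η : D.domain,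
      form ξ η = ⟪a (ξ : H), D η⟫ - ⟪a (D ξ), (η : H)⟫ := fun ξ η => rfl
  -- extend to `H` in the second variable
  set φ : D.domain → H →L[ℂ] ℂ := fun ξ => (form ξ).extend e with hφ
  have hφ_apply : ∀ ξ η : D.domain, φ ξ (η : H) = form ξ η := by
    intro ξ η
    exact (form ξ).extend_eq h_dense h_e η
  have hφ_norm : ∀ ξ : D.domain, ‖φ ξ‖ ≤ c * ‖(ξ : H)‖ := by
    intro ξ
    have h2 := ContinuousLinearMap.opNorm_extend_le (form ξ) h_dense h1
    have h3 : ‖form ξ‖ ≤ c * ‖(ξ : H)‖ :=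
      LinearMap.mkContinuous_norm_le _
        (mul_nonneg hc.le (norm_nonneg _)) _
    calc ‖φ ξ‖ ≤ ((1 : NNReal) : ℝ) * ‖form ξ‖ := h2
      _ = ‖form ξ‖ := by simp
      _ ≤ c * ‖(ξ : H)‖ := h3
  -- the operator on the domain, via Riesz representation
  set g : D.domain → H := fun ξ => (InnerProductSpace.toDual ℂ H).symm (φ ξ) with hg
  have hg_inner : ∀ ξ η : D.domain,
      ⟪g ξ, (η : H)⟫ = ⟪a (ξ : H), D η⟫ - ⟪a (D ξ), (η : H)⟫ := by
    intro ξ η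
    rw [hg]
    rw [InnerProductSpace.toDual_symm_apply]
    rw [hφ_apply, hform_apply]
  have hg_norm : ∀ ξ : D.domain, ‖g ξ‖ ≤ c * ‖(ξ : H)‖ := by
    intro ξ
    rw [hg]
    rw [LinearIsometryEquiv.norm_map]
    exact hφ_norm ξ
  have hg_add : ∀ ξ ξ' : D.domain, g (ξ + ξ') = g ξ + g ξ' := by
    intro ξ ξ'
    refine hdense.eq_of_inner_left ℂ fun w hw => ?_
    obtain ⟨v, rfl⟩ : ∃ v : D.domain, (v : H) = w := ⟨⟨w, hw⟩, rfl⟩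
    rw [inner_add_left, hg_inner, hg_inner, hg_inner]
    simp only [Submodule.coe_add, _root_.map_add, inner_add_left, D.map_add]
    ring
  have hg_smul : ∀ (m : ℂ) (ξ : D.domain), g (m • ξ) = m • g ξ := by
    intro m ξ
    refine hdense.eq_of_inner_left ℂ fun w hw => ?_
    obtain ⟨v, rfl⟩ : ∃ v : D.domain, (v : H) = w := ⟨⟨w, hw⟩, rfl⟩
    rw [inner_smul_left, hg_inner, hg_inner]
    simp only [Submodule.coe_smul_of_tower, _root_.map_smul, inner_smul_left, D.map_smul]
    ring
  set G : D.domain →L[ℂ] H :=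
    LinearMap.mkContinuous
      { toFun := g
        map_add' := hg_add
        map_smul' := fun m ξ => hg_smul m ξ }
      c
      (fun ξ => by simpa [Submodule.coe_norm] using hg_norm ξ) with hG
  refine ⟨G.extend e, ?_, ?_⟩
  · intro ξ η
    have hb1 : G.extend e (ξ : H) = g ξ := G.extend_eq h_dense h_e ξ
    rw [hb1]
    exact hg_inner ξ η
  · have h2 := ContinuousLinearMap.opNorm_extend_le G h_dense h1
    have h3 : ‖G‖ ≤ c := LinearMap.mkContinuous_norm_le _ hc.le _
    calc ‖G.extend e‖ ≤ ((1 : NNReal) : ℝ) * ‖G‖ := h2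
      _ = ‖G‖ := by simp
      _ ≤ c := h3
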